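/- Deleting one cost changes the regularized virtual cost by at most a factor of 2: for every index i with 1 ≤ i ≤ m and i ≠ k, one has (1/2)·φ_1(c_i) ≤ φ_2(c_i) ≤ 2·φ_1(c_i). -/

import Mathlib

/-- Virtual cost of the uniform distribution over a sorted list `(d 1, …, d r)`:
`ψ j = j·d j − (j−1)·d (j−1)`. -/
noncomputable def vc (d : ℕ → ℝ) (j : ℕ) : ℝ :=
  (j : ℝ) * d j - ((j : ℝ) - 1) * d (j - 1)

/-- `Avg(l,k') = (1/(k'−l+1))·Σ_{t=l}^{k'} ψ_t`. -/
noncomputable def avg (d : ℕ → ℝ) (l k' : ℕ) : ℝ :=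
  (∑ t ∈ Finset.Icc l k', vc d t) / ((k' : ℝ) - (l : ℝ) + 1)

/-- `ψ'_l = min_{l ≤ k' ≤ r} Avg(l,k')`. -/
noncomputable def rvcAux (r : ℕ) (d : ℕ → ℝ) (l : ℕ) : ℝ :=
  sInf {x | ∃ k', l ≤ k' ∧ k' ≤ r ∧ x = avg d l k'}

/-- Regularized virtual cost of the sorted list `(d 1, …, d r)`:
`φ_j = max_{1 ≤ l ≤ j} ψ'_l`. -/
noncomputable def rvc (r : ℕ) (d : ℕ → ℝ) (j : ℕ) : ℝ :=
  sSup {x | ∃ l, 1 ≤ l ∧ l ≤ j ∧ x = rvcAux r d l}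

/-- The sorted list `T₁` obtained from `(c 1, …, c m)` by deleting `c k`. -/
noncomputable def delList (k : ℕ) (c : ℕ → ℝ) (j : ℕ) : ℝ :=
  if j < k then c j else c (j + 1)

/-- `φ₁(c i)`: the regularized virtual cost of `T₁` at the position of `c i`
within `T₁` (position `i` for `i < k`, position `i − 1` for `i > k`). -/
noncomputable def rvcDel (m k : ℕ) (c : ℕ → ℝ) (i : ℕ) : ℝ :=
  rvc (m - 1) (delList k c) (if i < k then i else i - 1)

lemma avgSet_eq (d : ℕ → ℝ) (l r : ℕ) :
    {x | ∃ k', l ≤ k' ∧ k' ≤ r ∧ x = avg d l k'} =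
      ↑((Finset.Icc l r).image (avg d l)) := by
  ext x
  simp only [Finset.coe_image, Finset.coe_Icc, Set.mem_image, Set.mem_Icc, Set.mem_setOf_eq]
  constructor
  · rintro ⟨k', h1, h2, rfl⟩; exact ⟨k', ⟨h1, h2⟩, rfl⟩
  · rintro ⟨k', ⟨h1, h2⟩, rfl⟩; exact ⟨k', h1, h2, rfl⟩

lemma rvcSet_eq (r : ℕ) (d : ℕ → ℝ) (j : ℕ) :
    {x | ∃ l, 1 ≤ l ∧ l ≤ j ∧ x = rvcAux r d l} =
      ↑((Finset.Icc 1 j).image (rvcAux r d)) := by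
  ext x
  simp only [Finset.coe_image, Finset.coe_Icc, Set.mem_image, Set.mem_Icc, Set.mem_setOf_eq]
  constructor
  · rintro ⟨l, h1, h2, rfl⟩; exact ⟨l, ⟨h1, h2⟩, rfl⟩
  · rintro ⟨l, ⟨h1, h2⟩, rfl⟩; exact ⟨l, h1, h2, rfl⟩

lemma rvcAux_le {r : ℕ} {d : ℕ → ℝ} {l k' : ℕ} (h1 : l ≤ k') (h2 : k' ≤ r) :
    rvcAux r d l ≤ avg d l k' := by
  apply csInf_le
  · rw [avgSet_eq]; exact ((Finset.Icc l r).image (avg d l)).finite_toSet.bddBelow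
  · exact ⟨k', h1, h2, rfl⟩

lemma le_rvcAux {r : ℕ} {d : ℕ → ℝ} {l : ℕ} {x : ℝ} (hlr : l ≤ r)
    (h : ∀ k', l ≤ k' → k' ≤ r → x ≤ avg d l k') : x ≤ rvcAux r d l := by
  have hne : {x | ∃ k', l ≤ k' ∧ k' ≤ r ∧ x = avg d l k'}.Nonempty :=
    ⟨avg d l l, l, le_rfl, hlr, rfl⟩
  apply le_csInf hne
  rintro y ⟨k', h1, h2, rfl⟩; exact h k' h1 h2

lemma le_rvc {r : ℕ} {d : ℕ → ℝ} {l j : ℕ} (h1 : 1 ≤ l) (h2 : l ≤ j) :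
    rvcAux r d l ≤ rvc r d j := by
  apply le_csSup
  · rw [rvcSet_eq]; exact ((Finset.Icc 1 j).image (rvcAux r d)).finite_toSet.bddAbove
  · exact ⟨l, h1, h2, rfl⟩

lemma rvc_le {r : ℕ} {d : ℕ → ℝ} {j : ℕ} {x : ℝ} (hj : 1 ≤ j)
    (h : ∀ l, 1 ≤ l → l ≤ j → rvcAux r d l ≤ x) : rvc r d j ≤ x := by
  have hne : {x | ∃ l, 1 ≤ l ∧ l ≤ j ∧ x = rvcAux r d l}.Nonempty :=
    ⟨rvcAux r d 1, 1, le_rfl, hj, rfl⟩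
  apply csSup_le hne
  rintro y ⟨l, h1, h2, rfl⟩; exact h l h1 h2

lemma avg_closed (d : ℕ → ℝ) {l k' : ℕ} (hl : 1 ≤ l) (hk : l ≤ k') :
    avg d l k' = ((k' : ℝ) * d k' - ((l : ℝ) - 1) * d (l - 1)) / ((k' : ℝ) - l + 1) := by
  unfold avg
  congr 1
  induction k', hk using Nat.le_induction with
  | base => simp [vc]
  | succ n hn ih =>
      rw [Finset.sum_Icc_succ_top (le_trans hn (Nat.le_succ n)), ih]
      have : (n + 1) - 1 = n := rfl
      simp only [vc, this]
      push_cast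
      ring

lemma avg_self (d : ℕ → ℝ) (l : ℕ) : avg d l l = vc d l := by
  simp [avg]

section Main1
variable {m k : ℕ} (hm : 2 ≤ m) (hk1 : 1 ≤ k) (hkm : k ≤ m - 1)
  {c : ℕ → ℝ} (hc0 : c 0 = 0) (hmono : ∀ a b, a ≤ b → b ≤ m → c a ≤ c b)

include hc0 hmono in
omit hm hk1 hkm in
lemma hcpos : ∀ j, j ≤ m → 0 ≤ c j := fun j hj => hc0 ▸ hmono 0 j (Nat.zero_le _) hj

include hm hk1 hkm hc0 hmono in
lemma C1 {l k' : ℕ} (hl : 1 ≤ l) (hlk : l ≤ k) (hkk : k ≤ k') (hk'm : k' ≤ m - 1) :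
    avg c l (k' + 1) ≤ avg (delList k c) l k' ∧
      avg (delList k c) l k' ≤ 2 * avg c l (k' + 1) := by
  have hk'm' : k' + 1 ≤ m := by omega
  have hd1 : delList k c k' = c (k' + 1) := if_neg (by omega)
  have hd2 : delList k c (l - 1) = c (l - 1) := if_pos (by omega)
  rw [avg_closed (delList k c) hl (by omega : l ≤ k'),
    avg_closed c hl (by omega : l ≤ k' + 1), hd1, hd2]
  push_cast
  set K := (k' : ℝ) with hK
  set L := (l : ℝ) with hL
  set a := c (l - 1) with ha'
  set b := c (k' + 1) with hb'
  have hab : a ≤ b := hmono _ _ (by omega) hk'm'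
  have ha : 0 ≤ a := hcpos hc0 hmono _ (by omega)
  have hb : 0 ≤ b := hcpos hc0 hmono _ hk'm'
  have hL1 : (1 : ℝ) ≤ L := by rw [hL]; exact_mod_cast hl
  have hLK : L ≤ K := by rw [hL, hK]; exact_mod_cast le_trans hlk hkk
  have hD : (1 : ℝ) ≤ K - L + 1 := by linarith
  have hNb : (K - L + 1) * b ≤ K * b - (L - 1) * a := by nlinarith
  have hN : 0 ≤ K * b - (L - 1) * a := le_trans (by nlinarith) hNb
  constructor
  · rw [div_le_div_iff₀ (by linarith) (by linarith)]
    nlinarith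
  · rw [← mul_div_assoc, div_le_div_iff₀ (by linarith) (by linarith)]
    nlinarith [mul_nonneg hN (by linarith : (0:ℝ) ≤ K - L + 1 - 1),
      mul_nonneg hb (by linarith : (0:ℝ) ≤ K - L + 1)]

include hm hk1 hkm hc0 hmono in
lemma C2 {l k' : ℕ} (hkl : k + 1 ≤ l) (hlk : l ≤ k') (hk'm : k' ≤ m - 1) :
    avg (delList k c) l k' ≤ avg c (l + 1) (k' + 1) ∧
      avg c (l + 1) (k' + 1) ≤ 2 * avg (delList k c) l k' := by
  have hk'm' : k' + 1 ≤ m := by omega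
  have hd1 : delList k c k' = c (k' + 1) := if_neg (by omega)
  have hd2 : delList k c (l - 1) = c l := by
    rw [delList, if_neg (by omega)]; congr 1; omega
  have hll : (l + 1) - 1 = l := rfl
  rw [avg_closed (delList k c) (by omega) hlk,
    avg_closed c (by omega : 1 ≤ l + 1) (by omega : l + 1 ≤ k' + 1), hd1, hd2, hll]
  push_cast
  set K := (k' : ℝ) with hK
  set L := (l : ℝ) with hL
  set a := c l with ha'
  set b := c (k' + 1) with hb'
  have hab : a ≤ b := hmono _ _ (by omega) hk'm'
  have ha : 0 ≤ a := hcpos hc0 hmono _ (by omega)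
  have hL1 : (1 : ℝ) ≤ L := by rw [hL]; exact_mod_cast le_trans hk1 (by omega : k ≤ l)
  have hLK : L ≤ K := by rw [hL, hK]; exact_mod_cast hlk
  have hD : (1 : ℝ) ≤ K - L + 1 := by linarith
  have hNb : (K - L + 1) * b ≤ K * b - (L - 1) * a := by nlinarith
  have hb : 0 ≤ b := hcpos hc0 hmono _ hk'm'
  have hden : K + 1 - (L + 1) + 1 = K - L + 1 := by ring
  rw [hden]
  constructor
  · rw [div_le_div_iff₀ (by linarith) (by linarith)]
    nlinarith
  · rw [← mul_div_assoc, div_le_div_iff₀ (by linarith) (by linarith)]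
    have hkey : (0:ℝ) ≤ (K - 1) * b - (L - 2) * a := by
      nlinarith [mul_nonneg (sub_nonneg.mpr hab) (by linarith : (0:ℝ) ≤ K - 1),
        mul_nonneg ha (by linarith : (0:ℝ) ≤ K - L + 1)]
    nlinarith [mul_nonneg hkey (by linarith : (0:ℝ) ≤ K - L + 1)]

include hm hc0 hmono in
lemma C3 {l k' : ℕ} (hl : 1 ≤ l) (hlk : l ≤ k') (hk'm : k' + 1 ≤ m) :
    avg c l k' ≤ 2 * avg c l (k' + 1) := by
  rw [avg_closed c hl hlk, avg_closed c hl (by omega : l ≤ k' + 1)]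
  push_cast
  set K := (k' : ℝ) with hK
  set L := (l : ℝ) with hL
  set a := c (l - 1) with ha'
  set c1 := c k' with hc1'
  set b := c (k' + 1) with hb'
  have hab : a ≤ c1 := hmono _ _ (by omega) (by omega)
  have hcb : c1 ≤ b := hmono _ _ (by omega) hk'm
  have ha : 0 ≤ a := hcpos hc0 hmono _ (by omega)
  have hL1 : (1 : ℝ) ≤ L := by rw [hL]; exact_mod_cast hl
  have hLK : L ≤ K := by rw [hL, hK]; exact_mod_cast hlk
  have hD : (1 : ℝ) ≤ K - L + 1 := by linarith
  have hN : 0 ≤ K * c1 - (L - 1) * a := by nlinarith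
  rw [← mul_div_assoc, div_le_div_iff₀ (by linarith) (by linarith)]
  nlinarith [mul_nonneg hN (by linarith : (0:ℝ) ≤ K - L + 1 - 1),
    mul_nonneg (by nlinarith : (0:ℝ) ≤ (K + 1) * b - K * c1)
      (by linarith : (0:ℝ) ≤ K - L + 1)]

include hm hk1 hkm hc0 hmono in
lemma C4 {k' : ℕ} (hkk : k ≤ k') (hk'm : k' ≤ m - 1)
    (hψ : 2 * vc c k ≤ avg (delList k c) k k') :
    avg (delList k c) k k' ≤ 2 * avg c (k + 1) (k' + 1) := by
  have hk'm' : k' + 1 ≤ m := by omega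
  have hd1 : delList k c k' = c (k' + 1) := if_neg (by omega)
  have hd2 : delList k c (k - 1) = c (k - 1) := if_pos (by omega)
  have hcl : avg (delList k c) k k' =
      ((k' : ℝ) * c (k' + 1) - ((k : ℝ) - 1) * c (k - 1)) / ((k' : ℝ) - k + 1) := by
    rw [avg_closed (delList k c) hk1 hkk, hd1, hd2]
  have hkk1 : (k + 1) - 1 = k := rfl
  rw [hcl, avg_closed c (by omega : 1 ≤ k + 1) (by omega : k + 1 ≤ k' + 1), hkk1]
  rw [hcl] at hψ
  unfold vc at hψ
  push_cast at hψ ⊢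
  set K := (k' : ℝ) with hK
  set L := (k : ℝ) with hL
  set a := c (k - 1) with ha'
  set ck := c k with hck'
  set b := c (k' + 1) with hb'
  have hab : a ≤ b := hmono _ _ (by omega) hk'm'
  have ha : 0 ≤ a := hcpos hc0 hmono _ (by omega)
  have hb : 0 ≤ b := hcpos hc0 hmono _ hk'm'
  have hL1 : (1 : ℝ) ≤ L := by rw [hL]; exact_mod_cast hk1
  have hLK : L ≤ K := by rw [hL, hK]; exact_mod_cast hkk
  have hD : (1 : ℝ) ≤ K - L + 1 := by linarith
  have hNb : (K - L + 1) * b ≤ K * b - (L - 1) * a := by nlinarith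
  have hN : 0 ≤ K * b - (L - 1) * a := le_trans (by nlinarith) hNb
  have hvc : 2 * (L * ck - (L - 1) * a) ≤ K * b - (L - 1) * a := by
    calc 2 * (L * ck - (L - 1) * a) ≤ (K * b - (L - 1) * a) / (K - L + 1) := hψ
    _ ≤ K * b - (L - 1) * a := by
        rw [div_le_iff₀ (by linarith)]; nlinarith
  have hden : K + 1 - (L + 1) + 1 = K - L + 1 := by ring
  rw [hden, ← mul_div_assoc, div_le_div_iff₀ (by linarith) (by linarith)]
  nlinarith [mul_nonneg hb (by linarith : (0:ℝ) ≤ K - L + 1),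
    mul_nonneg hN (by linarith : (0:ℝ) ≤ K - L + 1)]

include hm hk1 hkm hc0 hmono in
lemma C5 {k' : ℕ} (hkk : k ≤ k') (hk'm : k' ≤ m - 1) :
    avg c (k + 1) (k' + 1) ≤ 2 * avg (delList k c) k k' := by
  have hk'm' : k' + 1 ≤ m := by omega
  have hd1 : delList k c k' = c (k' + 1) := if_neg (by omega)
  have hd2 : delList k c (k - 1) = c (k - 1) := if_pos (by omega)
  have hkk1 : (k + 1) - 1 = k := rfl
  rw [avg_closed (delList k c) hk1 hkk, hd1, hd2,
    avg_closed c (by omega : 1 ≤ k + 1) (by omega : k + 1 ≤ k' + 1), hkk1]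
  push_cast
  set K := (k' : ℝ) with hK
  set L := (k : ℝ) with hL
  set a := c (k - 1) with ha'
  set ck := c k with hck'
  set b := c (k' + 1) with hb'
  have hab : a ≤ b := hmono _ _ (by omega) hk'm'
  have hack : a ≤ ck := hmono _ _ (by omega) (by omega)
  have ha : 0 ≤ a := hcpos hc0 hmono _ (by omega)
  have hb : 0 ≤ b := hcpos hc0 hmono _ hk'm'
  have hL1 : (1 : ℝ) ≤ L := by rw [hL]; exact_mod_cast hk1
  have hLK : L ≤ K := by rw [hL, hK]; exact_mod_cast hkk
  have hD : (1 : ℝ) ≤ K - L + 1 := by linarith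
  have hNb : (K - L + 1) * b ≤ K * b - (L - 1) * a := by nlinarith
  have hvc : 0 ≤ L * ck - (L - 1) * a := by nlinarith
  have hden : K + 1 - (L + 1) + 1 = K - L + 1 := by ring
  rw [hden, ← mul_div_assoc, div_le_div_iff₀ (by linarith) (by linarith)]
  nlinarith [mul_nonneg hb (by linarith : (0:ℝ) ≤ K - L + 1 - 1)]
end Main1

lemma avg_nonneg_gen (d : ℕ → ℝ) {r l k' : ℕ} (hd0 : d 0 = 0)
    (hdm : ∀ a b, a ≤ b → b ≤ r → d a ≤ d b)
    (hl : 1 ≤ l) (hlk : l ≤ k') (hk'r : k' ≤ r) : 0 ≤ avg d l k' := by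
  rw [avg_closed d hl hlk]
  have h0 : 0 ≤ d (l - 1) := hd0 ▸ hdm 0 (l - 1) (Nat.zero_le _) (by omega)
  have h1 : d (l - 1) ≤ d k' := hdm _ _ (by omega) hk'r
  have hL1 : (1 : ℝ) ≤ (l : ℝ) := by exact_mod_cast hl
  have hLK : (l : ℝ) ≤ (k' : ℝ) := by exact_mod_cast hlk
  apply div_nonneg _ (by linarith)
  nlinarith

lemma rvcAux_nonneg_gen (d : ℕ → ℝ) {r l : ℕ} (hd0 : d 0 = 0)
    (hdm : ∀ a b, a ≤ b → b ≤ r → d a ≤ d b)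
    (hl : 1 ≤ l) (hlr : l ≤ r) : 0 ≤ rvcAux r d l :=
  le_rvcAux hlr fun k' h1 h2 => avg_nonneg_gen d hd0 hdm hl h1 h2

lemma rvc_nonneg_gen (d : ℕ → ℝ) {r j : ℕ} (hd0 : d 0 = 0)
    (hdm : ∀ a b, a ≤ b → b ≤ r → d a ≤ d b)
    (hj : 1 ≤ j) (hr : 1 ≤ r) : 0 ≤ rvc r d j :=
  le_trans (rvcAux_nonneg_gen d hd0 hdm le_rfl hr) (le_rvc le_rfl hj)

section Main2
variable {m k : ℕ} (hm : 2 ≤ m) (hk1 : 1 ≤ k) (hkm : k ≤ m - 1)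
  {c : ℕ → ℝ} (hc0 : c 0 = 0) (hmono : ∀ a b, a ≤ b → b ≤ m → c a ≤ c b)

include hk1 hc0 in
lemma dl0 : delList k c 0 = 0 := by rw [delList, if_pos (by omega)]; exact hc0

include hm hmono in
lemma dlmono : ∀ a b, a ≤ b → b ≤ m - 1 → delList k c a ≤ delList k c b := by
  intro a b hab hbm
  unfold delList
  split_ifs with h1 h2 h2
  · exact hmono a b hab (by omega)
  · exact hmono a (b + 1) (by omega) (by omega)
  · omega
  · exact hmono (a + 1) (b + 1) (by omega) (by omega)

include hk1 in
lemma avg_del_low {l k' : ℕ} (hl : 1 ≤ l) (hlk : l ≤ k') (hk' : k' < k) :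
    avg (delList k c) l k' = avg c l k' := by
  have h1 : delList k c k' = c k' := if_pos hk'
  have h2 : delList k c (l - 1) = c (l - 1) := if_pos (by omega)
  rw [avg_closed (delList k c) hl hlk, avg_closed c hl hlk, h1, h2]

include hm hk1 hkm hc0 hmono in
lemma U1 {l : ℕ} (hl : 1 ≤ l) (hlk : l ≤ k) :
    rvcAux m c l ≤ rvcAux (m - 1) (delList k c) l := by
  apply le_rvcAux (by omega)
  intro k' h1 h2
  by_cases hc : k' < k
  · rw [avg_del_low hk1 hl h1 hc]
    exact rvcAux_le h1 (by omega)
  · exact le_trans (rvcAux_le (by omega : l ≤ k' + 1) (by omega))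
      (C1 hm hk1 hkm hc0 hmono hl hlk (by omega) h2).1

include hm hk1 hkm hc0 hmono in
lemma U2 : rvcAux m c (k + 1) ≤ 2 * rvcAux (m - 1) (delList k c) k := by
  have h : rvcAux m c (k + 1) / 2 ≤ rvcAux (m - 1) (delList k c) k := by
    apply le_rvcAux (by omega)
    intro k' h1 h2
    have h3 : rvcAux m c (k + 1) ≤ avg c (k + 1) (k' + 1) :=
      rvcAux_le (by omega) (by omega)
    have h4 := C5 hm hk1 hkm hc0 hmono h1 h2
    linarith
  linarith

include hm hk1 hkm hc0 hmono in
lemma U3 {l : ℕ} (hkl : k + 1 ≤ l) (hlm : l ≤ m - 1) :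
    rvcAux m c (l + 1) ≤ 2 * rvcAux (m - 1) (delList k c) l := by
  have h : rvcAux m c (l + 1) / 2 ≤ rvcAux (m - 1) (delList k c) l := by
    apply le_rvcAux hlm
    intro k' h1 h2
    have h3 : rvcAux m c (l + 1) ≤ avg c (l + 1) (k' + 1) :=
      rvcAux_le (by omega) (by omega)
    have h4 := (C2 hm hk1 hkm hc0 hmono hkl h1 h2).2
    linarith
  linarith

include hm hk1 hkm hc0 hmono in
lemma D1 {l : ℕ} (hl : 1 ≤ l) (hlk : l + 1 ≤ k) :
    rvcAux (m - 1) (delList k c) l ≤ 2 * rvcAux m c l := by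
  set Y := rvcAux (m - 1) (delList k c) l with hY
  have h : Y / 2 ≤ rvcAux m c l := by
    apply le_rvcAux (by omega)
    intro k'' h1 h2
    rcases lt_trichotomy k'' k with hlt | rfl | hgt
    · have hA : Y ≤ avg c l k'' := by
        rw [← avg_del_low hk1 hl h1 hlt]
        exact rvcAux_le h1 (by omega)
      have hAn : 0 ≤ avg c l k'' :=
        avg_nonneg_gen c hc0 hmono hl h1 h2
      linarith
    · have hA : Y ≤ avg c l (k'' - 1) := by
        rw [← avg_del_low hk1 hl (by omega) (by omega)]
        exact rvcAux_le (by omega) (by omega)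
      have hC : avg c l (k'' - 1) ≤ 2 * avg c l ((k'' - 1) + 1) :=
        C3 hm hc0 hmono hl (by omega) (by omega)
      rw [(by omega : (k'' - 1) + 1 = k'')] at hC
      linarith
    · have hA : Y ≤ avg (delList k c) l (k'' - 1) := rvcAux_le (by omega) (by omega)
      have hC := (C1 hm hk1 hkm hc0 hmono hl (by omega) (by omega : k ≤ k'' - 1)
        (by omega : k'' - 1 ≤ m - 1)).2
      rw [(by omega : (k'' - 1) + 1 = k'')] at hC
      linarith
  linarith

include hm hk1 hkm hc0 hmono in
lemma D2 : rvcAux (m - 1) (delList k c) k ≤ 2 * rvcAux m c k ∨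
    rvcAux (m - 1) (delList k c) k ≤ 2 * rvcAux m c (k + 1) := by
  set Y := rvcAux (m - 1) (delList k c) k with hY
  by_cases hcase : Y ≤ 2 * vc c k
  · left
    have h : Y / 2 ≤ rvcAux m c k := by
      apply le_rvcAux (by omega)
      intro k'' h1 h2
      rcases eq_or_lt_of_le h1 with heq | hgt
      · rw [← heq, avg_self]; linarith
      · have hA : Y ≤ avg (delList k c) k (k'' - 1) := rvcAux_le (by omega) (by omega)
        have hC := (C1 hm hk1 hkm hc0 hmono hk1 le_rfl (by omega : k ≤ k'' - 1)
          (by omega : k'' - 1 ≤ m - 1)).2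
        rw [(by omega : (k'' - 1) + 1 = k'')] at hC
        linarith
    linarith
  · right
    push_neg at hcase
    have h : Y / 2 ≤ rvcAux m c (k + 1) := by
      apply le_rvcAux (by omega)
      intro k'' h1 h2
      have hA : Y ≤ avg (delList k c) k (k'' - 1) := rvcAux_le (by omega) (by omega)
      have hC := C4 hm hk1 hkm hc0 hmono (by omega : k ≤ k'' - 1)
        (by omega : k'' - 1 ≤ m - 1) (by linarith)
      rw [(by omega : (k'' - 1) + 1 = k'')] at hC
      linarith
    linarith

include hm hk1 hkm hc0 hmono in
lemma D3 {l : ℕ} (hkl : k + 1 ≤ l) (hlm : l ≤ m - 1) :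
    rvcAux (m - 1) (delList k c) l ≤ rvcAux m c (l + 1) := by
  apply le_rvcAux (by omega)
  intro k'' h1 h2
  have hA : rvcAux (m - 1) (delList k c) l ≤ avg (delList k c) l (k'' - 1) :=
    rvcAux_le (by omega) (by omega)
  have hC := (C2 hm hk1 hkm hc0 hmono hkl (by omega : l ≤ k'' - 1)
    (by omega : k'' - 1 ≤ m - 1)).1
  rw [(by omega : (k'' - 1) + 1 = k'')] at hC
  linarith

end Main2

/-- deleting one cost changes the regularized virtual cost by at
most a factor of 2. -/
theorem stmt8 (m k : ℕ) (hm : 2 ≤ m) (hk1 : 1 ≤ k) (hkm : k ≤ m - 1)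
    (c : ℕ → ℝ) (hc0 : c 0 = 0)
    (hmono : ∀ a b, a ≤ b → b ≤ m → c a ≤ c b) :
    ∀ i, 1 ≤ i → i ≤ m → i ≠ k →
      (1 / 2) * rvcDel m k c i ≤ rvc m c i ∧ rvc m c i ≤ 2 * rvcDel m k c i := by
  intro i hi1 him hik
  have hd0 : delList k c 0 = 0 := dl0 hk1 hc0
  have hdm := dlmono (k := k) hm hmono
  have hcn : 0 ≤ rvc m c i := rvc_nonneg_gen c hc0 hmono hi1 (by omega)
  unfold rvcDel
  by_cases hik2 : i < k
  · rw [if_pos hik2]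
    have hdn : 0 ≤ rvc (m - 1) (delList k c) i := rvc_nonneg_gen _ hd0 hdm hi1 (by omega)
    have hA : rvc m c i ≤ 2 * rvc (m - 1) (delList k c) i := by
      apply rvc_le hi1
      intro l hl1 hli
      have h1 := U1 hm hk1 hkm hc0 hmono hl1 (by omega : l ≤ k)
      have h2 : rvcAux (m - 1) (delList k c) l ≤ rvc (m - 1) (delList k c) i :=
        le_rvc hl1 hli
      linarith
    have hB : rvc (m - 1) (delList k c) i ≤ 2 * rvc m c i := by
      apply rvc_le hi1
      intro l hl1 hli
      have h1 := D1 hm hk1 hkm hc0 hmono hl1 (by omega : l + 1 ≤ k)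
      have h2 : rvcAux m c l ≤ rvc m c i := le_rvc hl1 hli
      linarith
    exact ⟨by linarith, hA⟩
  · rw [if_neg hik2]
    have hik3 : k + 1 ≤ i := by omega
    have hp1 : 1 ≤ i - 1 := by omega
    have hdn : 0 ≤ rvc (m - 1) (delList k c) (i - 1) :=
      rvc_nonneg_gen _ hd0 hdm hp1 (by omega)
    have hA : rvc m c i ≤ 2 * rvc (m - 1) (delList k c) (i - 1) := by
      apply rvc_le hi1
      intro l hl1 hli
      rcases le_or_gt l k with hlk | hkl
      · have h1 := U1 hm hk1 hkm hc0 hmono hl1 hlk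
        have h2 : rvcAux (m - 1) (delList k c) l ≤ rvc (m - 1) (delList k c) (i - 1) :=
          le_rvc hl1 (by omega)
        linarith
      · by_cases hl2 : l = k + 1
        · subst hl2
          have h1 := U2 hm hk1 hkm hc0 hmono
          have h2 : rvcAux (m - 1) (delList k c) k ≤ rvc (m - 1) (delList k c) (i - 1) :=
            le_rvc hk1 (by omega)
          linarith
        · have h1 := U3 hm hk1 hkm hc0 hmono (l := l - 1) (by omega) (by omega)
          rw [(by omega : (l - 1) + 1 = l)] at h1
          have h2 : rvcAux (m - 1) (delList k c) (l - 1) ≤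
              rvc (m - 1) (delList k c) (i - 1) := le_rvc (by omega) (by omega)
          linarith
    have hB : rvc (m - 1) (delList k c) (i - 1) ≤ 2 * rvc m c i := by
      apply rvc_le hp1
      intro l hl1 hlp
      rcases lt_trichotomy l k with hlt | rfl | hgt
      · have h1 := D1 hm hk1 hkm hc0 hmono hl1 (by omega)
        have h2 : rvcAux m c l ≤ rvc m c i := le_rvc hl1 (by omega)
        linarith
      · rcases D2 hm hk1 hkm hc0 hmono with h1 | h1
        · have h2 : rvcAux m c l ≤ rvc m c i := le_rvc hl1 (by omega)
          linarith
        · have h2 : rvcAux m c (l + 1) ≤ rvc m c i := le_rvc (by omega) (by omega)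
          linarith
      · have h1 := D3 hm hk1 hkm hc0 hmono (by omega : k + 1 ≤ l) (by omega : l ≤ m - 1)
        have h2 : rvcAux m c (l + 1) ≤ rvc m c i := le_rvc (by omega) (by omega)
        linarith
    exact ⟨by linarith, hA⟩
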